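/- Let G be a finite group, M a semi-Mackey functor on G valued in commutative monoids, and 𝒮 ⊆ M a semi-Mackey subfunctor. Then the objectwise localization 𝒮⁻¹M, with 𝒮⁻¹M(X) = 𝒮(X)⁻¹M(X), carries a unique semi-Mackey functor structure such that the localization maps ℓ_{𝒮,X} : M(X) → 𝒮⁻¹M(X) form a morphism of semi-Mackey functors: restrictions satisfy f^*(y/t) = f^*(y)/f^*(t) and transfers satisfy f_*(x/s) = f_*(x)/f_*(s). -/

import Mathlib

/-- A finite `G`-set: a finite type equipped with a `G`-action. -/
structure FinGSet (G : Type) [Group G] where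
  carrier : Type
  [fin : Fintype carrier]
  [act : MulAction G carrier]

attribute [instance] FinGSet.fin FinGSet.act

/-- A map of `G`-sets is equivariant if it commutes with the action. -/
def IsEquivariant {G : Type} [Group G] {X Y : FinGSet G}
    (f : X.carrier → Y.carrier) : Prop :=
  ∀ (g : G) (x : X.carrier), f (g • x) = g • f x

/-- The disjoint union of two finite `G`-sets. -/
def FinGSet.sum {G : Type} [Group G] (X Y : FinGSet G) : FinGSet G where
  carrier := X.carrier ⊕ Y.carrier

/-- A semi-Mackey functor on `G` with underlying family of commutative monoids `N`:
a contravariant functor `res` (restriction) and a covariant functor `tr`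
(transfer) on finite `G`-sets, additive on disjoint unions and satisfying the
Mackey (base change) condition on all pullback diagrams. -/
structure SemiMackey (G : Type) [Group G] (N : FinGSet G → Type)
    [∀ X, CommMonoid (N X)] where
  res : ∀ {X Y : FinGSet G} (f : X.carrier → Y.carrier), IsEquivariant f → (N Y →* N X)
  tr : ∀ {X Y : FinGSet G} (f : X.carrier → Y.carrier), IsEquivariant f → (N X →* N Y)
  res_id : ∀ (X : FinGSet G) (h : IsEquivariant (id : X.carrier → X.carrier)) (m : N X),
    res id h m = m
  tr_id : ∀ (X : FinGSet G) (h : IsEquivariant (id : X.carrier → X.carrier)) (m : N X),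
    tr id h m = m
  res_comp : ∀ {X Y Z : FinGSet G} (f : X.carrier → Y.carrier) (hf : IsEquivariant f)
    (g : Y.carrier → Z.carrier) (hg : IsEquivariant g)
    (hgf : IsEquivariant (g ∘ f)) (m : N Z),
    res (g ∘ f) hgf m = res f hf (res g hg m)
  tr_comp : ∀ {X Y Z : FinGSet G} (f : X.carrier → Y.carrier) (hf : IsEquivariant f)
    (g : Y.carrier → Z.carrier) (hg : IsEquivariant g)
    (hgf : IsEquivariant (g ∘ f)) (m : N X),
    tr (g ∘ f) hgf m = tr g hg (tr f hf m)
  additive : ∀ (X Y : FinGSet G)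
    (h₁ : IsEquivariant (X := X) (Y := FinGSet.sum X Y) Sum.inl)
    (h₂ : IsEquivariant (X := Y) (Y := FinGSet.sum X Y) Sum.inr),
    Function.Bijective (fun m : N (FinGSet.sum X Y) => (res Sum.inl h₁ m, res Sum.inr h₂ m))
  mackey : ∀ {P X W Y : FinGSet G}
    (f : X.carrier → Y.carrier) (hf : IsEquivariant f)
    (g : W.carrier → Y.carrier) (hg : IsEquivariant g)
    (pX : P.carrier → X.carrier) (hpX : IsEquivariant pX)
    (pW : P.carrier → W.carrier) (hpW : IsEquivariant pW)
    (hcomm : ∀ p, f (pX p) = g (pW p)),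
    Function.Bijective
      (fun p : P.carrier =>
        (⟨(pX p, pW p), hcomm p⟩ : {q : X.carrier × W.carrier // f q.1 = g q.2})) →
    ∀ m : N W, res f hf (tr g hg m) = tr pX hpX (res pW hpW m)


/-! ### Auxiliary material -/

/-- The induced map on localizations of a monoid hom respecting the submonoids. -/
noncomputable def locHom {A B : Type} [CommMonoid A] [CommMonoid B] (S : Submonoid A)
    (T : Submonoid B) (phi : A →* B) (h : ∀ s ∈ S, phi s ∈ T) :
    Localization S →* Localization T :=
  (Localization.monoidOf S).map (g := phi) (fun y => h y y.2) (Localization.monoidOf T)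

theorem locHom_mk {A B : Type} [CommMonoid A] [CommMonoid B] (S : Submonoid A)
    (T : Submonoid B) (phi : A →* B) (h : ∀ s ∈ S, phi s ∈ T) (a : A) (s : S) :
    locHom S T phi h (Localization.mk a s) = Localization.mk (phi a) ⟨phi s, h s s.2⟩ := by
  rw [Localization.mk_eq_monoidOf_mk'_apply, Localization.mk_eq_monoidOf_mk'_apply]
  exact (Localization.monoidOf S).map_mk' (fun y => h y y.2) a s

theorem mk_congr {A : Type} [CommMonoid A] {S : Submonoid A} {a b : A} {s t : S}
    (h1 : a = b) (h2 : (s : A) = (t : A)) : Localization.mk a s = Localization.mk b t := by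
  subst h1
  obtain rfl : s = t := Subtype.ext h2
  rfl

instance instEmptyMulAction (G : Type) [Group G] : MulAction G Empty where
  smul _ x := x.elim
  one_smul x := x.elim
  mul_smul _ _ x := x.elim

/-- The empty `G`-set. -/
def FinGSet.empty (G : Type) [Group G] : FinGSet G := ⟨Empty⟩

section Aux

variable {G : Type} [Group G] {N : FinGSet G → Type} [∀ X, CommMonoid (N X)]
  (M : SemiMackey G N)

theorem res_congr {X Y : FinGSet G} {f g : X.carrier → Y.carrier} (hf : IsEquivariant f)
    (hg : IsEquivariant g) (h : f = g) (m : N Y) : M.res f hf m = M.res g hg m := by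
  subst h; rfl

include M in
theorem nEmpty_eq (a b : N (FinGSet.empty G)) : a = b := by
  have h₁ : IsEquivariant (X := FinGSet.empty G)
      (Y := FinGSet.sum (FinGSet.empty G) (FinGSet.empty G)) Sum.inl := fun _ x => Empty.elim x
  have h₂ : IsEquivariant (X := FinGSet.empty G)
      (Y := FinGSet.sum (FinGSet.empty G) (FinGSet.empty G)) Sum.inr := fun _ x => Empty.elim x
  obtain ⟨m, hm⟩ := (M.additive _ _ h₁ h₂).surjective (a, b)
  have he : (Sum.inl : Empty → Empty ⊕ Empty) = Sum.inr := funext fun x => x.elim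
  have key := res_congr M h₁ h₂ he m
  have ha : M.res Sum.inl h₁ m = a := congrArg Prod.fst hm
  have hb : M.res Sum.inr h₂ m = b := congrArg Prod.snd hm
  rw [← ha, ← hb, key]

theorem tr_from_empty {X : FinGSet G} (p : Empty → X.carrier) (hp : IsEquivariant (X := FinGSet.empty G) p)
    (x : N (FinGSet.empty G)) : M.tr (X := FinGSet.empty G) p hp x = 1 := by
  rw [nEmpty_eq M x 1, map_one]

variable (X Y : FinGSet G)
  (h₁ : IsEquivariant (X := X) (Y := FinGSet.sum X Y) Sum.inl)
  (h₂ : IsEquivariant (X := Y) (Y := FinGSet.sum X Y) Sum.inr)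

theorem resl_trl (a : N X) : M.res Sum.inl h₁ (M.tr (X := X) (Y := FinGSet.sum X Y) Sum.inl h₁ a) = a := by
  have hid : IsEquivariant (id : X.carrier → X.carrier) := fun _ _ => rfl
  have hb : Function.Bijective (fun p : X.carrier =>
      (⟨(p, p), rfl⟩ : {q : X.carrier × X.carrier //
        (Sum.inl q.1 : (FinGSet.sum X Y).carrier) = Sum.inl q.2})) := by
    constructor
    · intro p q h
      exact congrArg (fun z => z.1.1) h
    · rintro ⟨⟨x, x'⟩, h⟩
      obtain rfl : x = x' := Sum.inl.inj h
      exact ⟨x, rfl⟩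
  have key := M.mackey (P := X) (X := X) (W := X) (Y := FinGSet.sum X Y) Sum.inl h₁ Sum.inl h₁ id hid id hid (fun _ => rfl) (by exact hb) a
  rw [key, M.res_id, M.tr_id]

theorem resr_trr (b : N Y) : M.res Sum.inr h₂ (M.tr (X := Y) (Y := FinGSet.sum X Y) Sum.inr h₂ b) = b := by
  have hid : IsEquivariant (id : Y.carrier → Y.carrier) := fun _ _ => rfl
  have hb : Function.Bijective (fun p : Y.carrier =>
      (⟨(p, p), rfl⟩ : {q : Y.carrier × Y.carrier //
        (Sum.inr q.1 : (FinGSet.sum X Y).carrier) = Sum.inr q.2})) := by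
    constructor
    · intro p q h
      exact congrArg (fun z => z.1.1) h
    · rintro ⟨⟨y, y'⟩, h⟩
      obtain rfl : y = y' := Sum.inr.inj h
      exact ⟨y, rfl⟩
  have key := M.mackey (P := Y) (X := Y) (W := Y) (Y := FinGSet.sum X Y) Sum.inr h₂ Sum.inr h₂ id hid id hid (fun _ => rfl) (by exact hb) b
  rw [key, M.res_id, M.tr_id]

theorem resr_trl (a : N X) : M.res Sum.inr h₂ (M.tr (X := X) (Y := FinGSet.sum X Y) Sum.inl h₁ a) = 1 := by
  have hpX : IsEquivariant (X := FinGSet.empty G) (Y := Y) (fun x => Empty.elim x) :=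
    fun _ x => x.elim
  have hpW : IsEquivariant (X := FinGSet.empty G) (Y := X) (fun x => Empty.elim x) :=
    fun _ x => x.elim
  have hb : Function.Bijective (fun p : Empty =>
      (⟨(Empty.elim p, Empty.elim p), Empty.elim p⟩ :
        {q : Y.carrier × X.carrier //
          (Sum.inr q.1 : (FinGSet.sum X Y).carrier) = Sum.inl q.2})) := by
    constructor
    · intro p
      exact Empty.elim p
    · rintro ⟨⟨y, x⟩, h⟩
      exact absurd h (by simp)
  have key := M.mackey (P := FinGSet.empty G) (X := Y) (W := X) (Y := FinGSet.sum X Y) Sum.inr h₂ Sum.inl h₁ (fun x => Empty.elim x) hpX (fun x => Empty.elim x) hpW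
    (fun p => Empty.elim p) (by exact hb) a
  rw [key]
  exact tr_from_empty M _ hpX _

theorem resl_trr (b : N Y) : M.res Sum.inl h₁ (M.tr (X := Y) (Y := FinGSet.sum X Y) Sum.inr h₂ b) = 1 := by
  have hpX : IsEquivariant (X := FinGSet.empty G) (Y := X) (fun x => Empty.elim x) :=
    fun _ x => x.elim
  have hpW : IsEquivariant (X := FinGSet.empty G) (Y := Y) (fun x => Empty.elim x) :=
    fun _ x => x.elim
  have hb : Function.Bijective (fun p : Empty =>
      (⟨(Empty.elim p, Empty.elim p), Empty.elim p⟩ :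
        {q : X.carrier × Y.carrier //
          (Sum.inl q.1 : (FinGSet.sum X Y).carrier) = Sum.inr q.2})) := by
    constructor
    · intro p
      exact Empty.elim p
    · rintro ⟨⟨x, y⟩, h⟩
      exact absurd h (by simp)
  have key := M.mackey (P := FinGSet.empty G) (X := X) (W := Y) (Y := FinGSet.sum X Y) Sum.inl h₁ Sum.inr h₂ (fun x => Empty.elim x) hpX (fun x => Empty.elim x) hpW
    (fun p => Empty.elim p) (by exact hb) b
  rw [key]
  exact tr_from_empty M _ hpX _

theorem sum_decomp (m : N (FinGSet.sum X Y)) :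
    M.tr Sum.inl h₁ (M.res Sum.inl h₁ m) * M.tr Sum.inr h₂ (M.res Sum.inr h₂ m) = m := by
  apply (M.additive X Y h₁ h₂).injective
  dsimp only
  rw [map_mul, map_mul, resl_trl M X Y h₁, resl_trr M X Y h₁ h₂, resr_trl M X Y h₁ h₂,
    resr_trr M X Y h₂, mul_one, one_mul]

end Aux

/-- Given a semi-Mackey subfunctor `𝒮 ⊆ M`, the objectwise localizations
`𝒮(X)⁻¹M(X)` carry a unique semi-Mackey functor structure for which the
localization maps constitute a morphism of semi-Mackey functors; its
restrictions satisfy `f^*(y/t) = f^*(y)/f^*(t)` and its transfers satisfy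
`f_*(x/s) = f_*(x)/f_*(s)`. -/
theorem semiMackey_localization_exists_unique {G : Type} [Group G]
    {N : FinGSet G → Type} [∀ X, CommMonoid (N X)] (M : SemiMackey G N)
    (S : ∀ X : FinGSet G, Submonoid (N X))
    (hres : ∀ {X Y : FinGSet G} (f : X.carrier → Y.carrier) (hf : IsEquivariant f),
      ∀ s ∈ S Y, M.res f hf s ∈ S X)
    (htr : ∀ {X Y : FinGSet G} (f : X.carrier → Y.carrier) (hf : IsEquivariant f),
      ∀ s ∈ S X, M.tr f hf s ∈ S Y) :
    ∃! L : SemiMackey G (fun X => Localization (S X)),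
      (∀ (X Y : FinGSet G) (f : X.carrier → Y.carrier) (hf : IsEquivariant f)
        (y : N Y) (t : S Y),
        L.res f hf (Localization.mk y t)
          = Localization.mk (M.res f hf y) ⟨M.res f hf t, hres f hf t t.2⟩) ∧
      (∀ (X Y : FinGSet G) (f : X.carrier → Y.carrier) (hf : IsEquivariant f)
        (x : N X) (s : S X),
        L.tr f hf (Localization.mk x s)
          = Localization.mk (M.tr f hf x) ⟨M.tr f hf s, htr f hf s s.2⟩) := by
  classical
  refine ⟨{
      res := fun f hf => locHom _ _ (M.res f hf) (hres f hf)
      tr := fun f hf => locHom _ _ (M.tr f hf) (htr f hf)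
      res_id := ?_
      tr_id := ?_
      res_comp := ?_
      tr_comp := ?_
      additive := ?_
      mackey := ?_ }, ⟨?_, ?_⟩, ?_⟩
  · intro X h m
    induction m using Localization.ind with
    | _ p =>
      obtain ⟨y, t⟩ := p
      rw [locHom_mk]
      exact mk_congr (M.res_id X h y) (M.res_id X h t)
  · intro X h m
    induction m using Localization.ind with
    | _ p =>
      obtain ⟨y, t⟩ := p
      rw [locHom_mk]
      exact mk_congr (M.tr_id X h y) (M.tr_id X h t)
  · intro X Y Z f hf g hg hgf m
    induction m using Localization.ind with
    | _ p =>
      obtain ⟨y, t⟩ := p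
      rw [locHom_mk, locHom_mk, locHom_mk]
      exact mk_congr (M.res_comp f hf g hg hgf y) (M.res_comp f hf g hg hgf t)
  · intro X Y Z f hf g hg hgf m
    induction m using Localization.ind with
    | _ p =>
      obtain ⟨y, t⟩ := p
      rw [locHom_mk, locHom_mk, locHom_mk]
      exact mk_congr (M.tr_comp f hf g hg hgf y) (M.tr_comp f hf g hg hgf t)
  · intro X Y h₁ h₂
    rw [Function.bijective_iff_has_inverse]
    refine ⟨fun p => locHom (S X) (S (FinGSet.sum X Y)) (M.tr Sum.inl h₁)
      (htr (X := X) (Y := FinGSet.sum X Y) Sum.inl h₁) p.1 *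
      locHom (S Y) (S (FinGSet.sum X Y)) (M.tr (X := Y) (Y := FinGSet.sum X Y) Sum.inr h₂)
        (htr (X := Y) (Y := FinGSet.sum X Y) Sum.inr h₂) p.2, ?_, ?_⟩
    · intro m
      induction m using Localization.ind with
      | _ p =>
        obtain ⟨a, s⟩ := p
        dsimp only
        rw [locHom_mk, locHom_mk, locHom_mk, locHom_mk, Localization.mk_mul]
        exact mk_congr (sum_decomp M X Y h₁ h₂ a) (sum_decomp M X Y h₁ h₂ s)
    · rintro ⟨p, q⟩
      induction p using Localization.ind with
      | _ u =>
        induction q using Localization.ind with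
        | _ v =>
          obtain ⟨a, s⟩ := u
          obtain ⟨b, t⟩ := v
          dsimp only
          rw [locHom_mk, locHom_mk, Localization.mk_mul, locHom_mk, locHom_mk]
          refine Prod.ext ?_ ?_
          · refine mk_congr ?_ ?_
            · rw [map_mul, resl_trl M X Y h₁, resl_trr M X Y h₁ h₂, mul_one]
            · show M.res Sum.inl h₁ (M.tr Sum.inl h₁ s * M.tr (X := Y) (Y := FinGSet.sum X Y) Sum.inr h₂ t) = (s : N X)
              rw [map_mul, resl_trl M X Y h₁, resl_trr M X Y h₁ h₂, mul_one]
          · refine mk_congr ?_ ?_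
            · rw [map_mul, resr_trl M X Y h₁ h₂, resr_trr M X Y h₂, one_mul]
            · show M.res Sum.inr h₂ (M.tr Sum.inl h₁ s * M.tr (X := Y) (Y := FinGSet.sum X Y) Sum.inr h₂ t) = (t : N Y)
              rw [map_mul, resr_trl M X Y h₁ h₂, resr_trr M X Y h₂, one_mul]
  · intro P X W Y f hf g hg pX hpX pW hpW hcomm hbij m
    induction m using Localization.ind with
    | _ p =>
      obtain ⟨y, t⟩ := p
      rw [locHom_mk, locHom_mk, locHom_mk, locHom_mk]
      exact mk_congr (M.mackey f hf g hg pX hpX pW hpW hcomm hbij y)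
        (M.mackey f hf g hg pX hpX pW hpW hcomm hbij t)
  · intro X Y f hf y t
    exact locHom_mk _ _ _ _ y t
  · intro X Y f hf x s
    exact locHom_mk _ _ _ _ x s
  · rintro L' ⟨hres', htr'⟩
    obtain ⟨res', tr', ri, ti, rc, tc, ad, mky⟩ := L'
    have e1 : @res' = fun X Y f hf => locHom (S Y) (S X) (M.res f hf) (hres f hf) := by
      funext X Y f hf
      refine MonoidHom.ext fun m => ?_
      induction m using Localization.ind with
      | _ p =>
        obtain ⟨y, t⟩ := p
        rw [locHom_mk]
        exact hres' X Y f hf y t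
    have e2 : @tr' = fun X Y f hf => locHom (S X) (S Y) (M.tr f hf) (htr f hf) := by
      funext X Y f hf
      refine MonoidHom.ext fun m => ?_
      induction m using Localization.ind with
      | _ p =>
        obtain ⟨x, s⟩ := p
        rw [locHom_mk]
        exact htr' X Y f hf x s
    subst e1
    subst e2
    rfl
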